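/- Let f₁,…,f_s ∈ ℤ[x₁,…,x_n] be polynomials and let V ⊆ ℂⁿ be their common zero set. For any coefficients (α_{i,j}), i=1..s, j=1..n+1, in ℂ that are algebraically independent over ℚ, the n+1 linear combinations g_j = Σ_{i=1}^s α_{i,j} f_i have common zero set exactly V. -/

import Mathlib

open MvPolynomial

namespace Stmt0Aux

open IntermediateField

set_option maxHeartbeats 1000000


/-- An element of an alg. independent Option-family is transcendental over the *field*
generated by the rest. -/
lemma key {F A : Type*} [Field F] [Field A] [Algebra F A] {ι : Type*}
    (x : ι → A) (a : A)
    (h : AlgebraicIndependent F (fun o : Option ι => o.elim a x)) :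
    ¬ IsAlgebraic (IntermediateField.adjoin F (Set.range x)) a := by
  rintro ⟨p, hp0, hpa⟩
  have hx : AlgebraicIndependent F x := h.comp some (Option.some_injective ι)
  have hinj : Function.Injective (MvPolynomial.aeval x : MvPolynomial ι F →ₐ[F] A) :=
    algebraicIndependent_iff_injective_aeval.mp hx
  let R := MvPolynomial ι F
  let K := FractionRing R
  let φ : K →ₐ[F] A := IsFractionRing.liftAlgHom hinj
  let p' : Polynomial K := p.map (hx.reprField : _ →+* K)
  have hrinj : Function.Injective (hx.reprField : IntermediateField.adjoin F (Set.range x) →+* K) :=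
    RingHom.injective _
  have hp'0 : p' ≠ 0 := by
    intro h0
    exact hp0 (Polynomial.map_injective _ hrinj (by simp only [Polynomial.map_zero]; exact h0))
  have hcomp : ((φ : K →+* A).comp (hx.reprField : _ →+* K)) =
      algebraMap (IntermediateField.adjoin F (Set.range x)) A := by
    ext z
    exact hx.lift_reprField z
  have hpe : Polynomial.eval₂ (φ : K →+* A) a p' = 0 := by
    rw [Polynomial.eval₂_map, hcomp, ← Polynomial.aeval_def]
    exact hpa
  let q := IsLocalization.integerNormalization (nonZeroDivisors R) p'
  have hq0 : q ≠ 0 := fun hq => hp'0 (IsFractionRing.integerNormalization_eq_zero_iff.mp hq)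
  have hqe : Polynomial.eval₂ ((MvPolynomial.aeval x : R →ₐ[F] A) : R →+* A) a q = 0 := by
    have h2 := IsLocalization.integerNormalization_eval₂_eq_zero (nonZeroDivisors R)
      (φ : K →+* A) p' hpe
    have h3 : (φ : K →+* A).comp (algebraMap R K) =
        ((MvPolynomial.aeval x : R →ₐ[F] A) : R →+* A) := by
      ext r
      · simp only [RingHom.coe_comp, Function.comp_apply, RingHom.coe_coe]
        rw [← MvPolynomial.algebraMap_eq, ← IsScalarTower.algebraMap_apply F R K,
          AlgHom.commutes, AlgHom.commutes]
      · simp [φ, IsFractionRing.liftAlgHom_apply, IsLocalization.lift_eq]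
        exact (IsFractionRing.lift_algebraMap hinj (X r)).trans (aeval_X x r)
    rwa [h3] at h2
  let Q := (MvPolynomial.optionEquivLeft F ι).symm q
  have hQ0 : Q ≠ 0 := by
    intro h0
    apply hq0
    have h1 : (MvPolynomial.optionEquivLeft F ι) ((MvPolynomial.optionEquivLeft F ι).symm q) =
        (MvPolynomial.optionEquivLeft F ι) 0 := congrArg _ h0
    rwa [AlgEquiv.apply_symm_apply, map_zero] at h1
  have comm : (Polynomial.eval₂RingHom ((MvPolynomial.aeval x : R →ₐ[F] A) : R →+* A) a).comp
      ((MvPolynomial.optionEquivLeft F ι) : MvPolynomial (Option ι) F →+* Polynomial R) =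
      ((MvPolynomial.aeval (fun o : Option ι => o.elim a x) :
        MvPolynomial (Option ι) F →ₐ[F] A) : _ →+* A) := by
    apply MvPolynomial.ringHom_ext
    · intro r
      simp only [RingHom.coe_comp, Function.comp_apply, RingHom.coe_coe, optionEquivLeft_C,
        Polynomial.coe_eval₂RingHom, Polynomial.eval₂_C]
      simp only [aeval_C]
      exact aeval_C x r
    · rintro (_ | i)
      · simp only [RingHom.coe_comp, Function.comp_apply, RingHom.coe_coe,
          optionEquivLeft_X_none, Polynomial.coe_eval₂RingHom, Polynomial.eval₂_X]
        simp [aeval_X]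
      · simp only [RingHom.coe_comp, Function.comp_apply, RingHom.coe_coe,
          optionEquivLeft_X_some, Polynomial.coe_eval₂RingHom, Polynomial.eval₂_C]
        simp only [aeval_X]
        exact aeval_X x i
  have hQe : MvPolynomial.aeval (fun o : Option ι => o.elim a x) Q = 0 := by
    have h1 := DFunLike.congr_fun comm Q
    simp only [RingHom.coe_comp, Function.comp_apply, RingHom.coe_coe,
      Polynomial.coe_eval₂RingHom] at h1
    have h2 : (MvPolynomial.optionEquivLeft F ι) Q = q := AlgEquiv.apply_symm_apply _ _
    rw [h2] at h1
    rw [← h1]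
    exact hqe
  exact hQ0 (h.eq_zero_of_aeval_eq_zero _ (by simpa using hQe))

lemma mono {F₁ F₂ : IntermediateField ℚ ℂ} (h : F₁ ≤ F₂) {z : ℂ}
    (hz : IsAlgebraic F₁ z) : IsAlgebraic F₂ z := by
  have hle : F₁.toSubalgebra ≤ F₂.toSubalgebra := h
  exact IsAlgebraic.tower_top_of_subalgebra_le hle hz

set_option maxHeartbeats 1000000 in
lemma tower (U W : Set ℂ) (hW : ∀ w ∈ W, IsAlgebraic (IntermediateField.adjoin ℚ U) w)
    {z : ℂ} (hz : IsAlgebraic (IntermediateField.adjoin ℚ (U ∪ W)) z) :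
    IsAlgebraic (IntermediateField.adjoin ℚ U) z := by
  set F := IntermediateField.adjoin ℚ U
  let E : IntermediateField F ℂ := IntermediateField.adjoin F W
  haveI h1 : Algebra.IsAlgebraic F E :=
    IntermediateField.isAlgebraic_adjoin (fun w hw => (hW w hw).isIntegral)
  haveI h2 : Algebra.IsIntegral F E := Algebra.isAlgebraic_iff_isIntegral.mp h1
  have hz' : IsAlgebraic E z := by
    have e : (IntermediateField.adjoin F W).restrictScalars ℚ =
        IntermediateField.adjoin ℚ (U ∪ W) := IntermediateField.adjoin_adjoin_left ℚ U W
    rw [← e] at hz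
    exact hz
  exact (isIntegral_trans (R := F) (A := E) z hz'.isIntegral).isAlgebraic

set_option maxHeartbeats 1000000 in
lemma exchange (U : Set ℂ) (s a : ℂ)
    (h1 : IsAlgebraic (IntermediateField.adjoin ℚ (U ∪ {s})) a)
    (h2 : ¬ IsAlgebraic (IntermediateField.adjoin ℚ U) a) :
    IsAlgebraic (IntermediateField.adjoin ℚ (U ∪ {a})) s := by
  by_contra h3
  set F := IntermediateField.adjoin ℚ U
  have ha : Transcendental F a := h2
  have hx1 : AlgebraicIndependent F (fun _ : Unit => a) := by
    rw [algebraicIndependent_unique_type_iff]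
    exact ha
  have hs : Transcendental (IntermediateField.adjoin F ({a} : Set ℂ)) s := by
    intro hAlg
    apply h3
    have e : (IntermediateField.adjoin F ({a} : Set ℂ)).restrictScalars ℚ =
        IntermediateField.adjoin ℚ (U ∪ {a}) := IntermediateField.adjoin_adjoin_left ℚ U {a}
    rw [← e]
    exact hAlg
  have hle : Algebra.adjoin F (Set.range (fun _ : Unit => a)) ≤
      (IntermediateField.adjoin F ({a} : Set ℂ)).toSubalgebra := by
    rw [Set.range_const]
    rw [Algebra.adjoin_le_iff]
    intro z hz
    rw [Set.mem_singleton_iff] at hz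
    subst hz
    exact IntermediateField.subset_adjoin _ _ rfl
  have hs' : Transcendental (Algebra.adjoin F (Set.range (fun _ : Unit => a))) s :=
    Transcendental.of_tower_top_of_subalgebra_le hle hs
  have hpair : AlgebraicIndependent F (fun o : Option Unit => o.elim s (fun _ : Unit => a)) :=
    (hx1.option_iff_transcendental s).mpr hs'
  have hswap : AlgebraicIndependent F (fun o : Option Unit => o.elim a (fun _ : Unit => s)) := by
    have hinj : Function.Injective
        (fun o : Option Unit => Option.elim o (some ()) (fun _ => none)) := by
      intro o1 o2 h
      cases o1 <;> cases o2 <;> simp_all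
    have hc := hpair.comp (fun o : Option Unit => Option.elim o (some ()) (fun _ => none)) hinj
    have heq : ((fun o : Option Unit => o.elim s (fun _ : Unit => a)) ∘
        (fun o : Option Unit => Option.elim o (some ()) (fun _ => none))) =
        (fun o : Option Unit => o.elim a (fun _ : Unit => s)) := by
      funext o; cases o <;> rfl
    rwa [heq] at hc
  apply key (fun _ : Unit => s) a hswap
  have e : (IntermediateField.adjoin F (Set.range fun _ : Unit => s)).restrictScalars ℚ =
      IntermediateField.adjoin ℚ (U ∪ {s}) := by
    rw [Set.range_const]
    exact IntermediateField.adjoin_adjoin_left ℚ U {s}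
  rw [← e] at h1
  exact h1

lemma option_indep {ι : Type} {m : ℕ} (xf : ι → ℂ) (a : Fin (m + 1) → ℂ)
    (hind : AlgebraicIndependent ℚ (Sum.elim xf a)) :
    AlgebraicIndependent ℚ (fun o : Option ι => o.elim (a 0) xf) := by
  have hinj : Function.Injective
      (fun o : Option ι => (o.elim (Sum.inr 0) Sum.inl : ι ⊕ Fin (m + 1))) := by
    intro o1 o2 h
    cases o1 <;> cases o2 <;> simp_all
  have hc := hind.comp _ hinj
  have heq : (Sum.elim xf a ∘ fun o : Option ι => (o.elim (Sum.inr 0) Sum.inl : ι ⊕ Fin (m + 1)))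
      = fun o : Option ι => o.elim (a 0) xf := by
    funext o; cases o <;> rfl
  rwa [heq] at hc

set_option maxHeartbeats 1000000 in
lemma core : ∀ (m : ℕ) (S : Set ℂ), S.Finite → S.ncard ≤ m →
    ∀ {ι : Type} (xf : ι → ℂ) (a : Fin (m + 1) → ℂ),
    AlgebraicIndependent ℚ (Sum.elim xf a) →
    (∀ k, IsAlgebraic (IntermediateField.adjoin ℚ (S ∪ Set.range xf)) (a k)) → False := by
  intro m
  induction m with
  | zero =>
    intro S hfin hcard ι xf a hind halg
    have hS : S = ∅ := (Set.ncard_eq_zero hfin).mp (Nat.le_zero.mp hcard)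
    subst hS
    apply key xf (a 0) (option_indep xf a hind)
    have h0 := halg 0
    rwa [Set.empty_union] at h0
  | succ m ih =>
    intro S hfin hcard ι xf a hind halg
    classical
    set P : Set ℂ → Prop := fun T => T ⊆ S ∧
      IsAlgebraic (IntermediateField.adjoin ℚ (T ∪ Set.range xf)) (a 0) with hP
    have hPS : P S := ⟨subset_rfl, halg 0⟩
    set N : Set ℕ := {n | ∃ T, P T ∧ T.ncard = n} with hNdef
    have hN : N.Nonempty := ⟨S.ncard, S, hPS, rfl⟩
    obtain ⟨T, hPT, hTcard⟩ : ∃ T, P T ∧ T.ncard = sInf N := Nat.sInf_mem hN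
    have hTfin : T.Finite := hfin.subset hPT.1
    rcases T.eq_empty_or_nonempty with hT | ⟨s, hsT⟩
    · subst hT
      apply key xf (a 0) (option_indep xf a hind)
      have h0 := hPT.2
      rwa [Set.empty_union] at h0
    · have hsS : s ∈ S := hPT.1 hsT
      have hmin : ¬ IsAlgebraic (IntermediateField.adjoin ℚ ((T \ {s}) ∪ Set.range xf)) (a 0) := by
        intro hbad
        have hmem : T.ncard - 1 ∈ N :=
          ⟨T \ {s}, ⟨Set.diff_subset.trans hPT.1, hbad⟩,
            Set.ncard_diff_singleton_of_mem hsT⟩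
        have hpos : 0 < T.ncard := (Set.ncard_pos hTfin).mpr ⟨s, hsT⟩
        have := Nat.sInf_le hmem
        omega
      have hTs : IsAlgebraic
          (IntermediateField.adjoin ℚ (((T \ {s}) ∪ Set.range xf) ∪ {s})) (a 0) := by
        refine mono (IntermediateField.adjoin.mono ℚ _ _ ?_) hPT.2
        intro z hz
        by_cases hzs : z = s <;>
          simp only [Set.mem_union, Set.mem_diff, Set.mem_singleton_iff] at hz ⊢ <;> tauto
      have hexc := exchange ((T \ {s}) ∪ Set.range xf) s (a 0) hTs hmin
      set xf' : Option ι → ℂ := fun o => o.elim (a 0) xf with hxf'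
      have hrange' : Set.range xf' = {a 0} ∪ Set.range xf := by
        ext z
        constructor
        · rintro ⟨(_ | i), rfl⟩
          · exact Or.inl rfl
          · exact Or.inr ⟨i, rfl⟩
        · rintro (hz | ⟨i, rfl⟩)
          · exact ⟨none, hz.symm⟩
          · exact ⟨some i, rfl⟩
      have hsAlg : IsAlgebraic (IntermediateField.adjoin ℚ ((S \ {s}) ∪ Set.range xf')) s := by
        refine mono (IntermediateField.adjoin.mono ℚ _ _ ?_) hexc
        rw [hrange']
        intro z hz
        have hTz : z ∈ T → z ∈ S := fun h => hPT.1 h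
        simp only [Set.mem_union, Set.mem_diff, Set.mem_singleton_iff] at hz ⊢
        tauto
      have halg' : ∀ k : Fin (m + 1),
          IsAlgebraic (IntermediateField.adjoin ℚ ((S \ {s}) ∪ Set.range xf')) (a k.succ) := by
        intro k
        refine tower _ {s} ?_ ?_
        · intro w hw
          rw [Set.mem_singleton_iff] at hw
          subst hw
          exact hsAlg
        · refine mono (IntermediateField.adjoin.mono ℚ _ _ ?_) (halg k.succ)
          rw [hrange']
          intro z hz
          by_cases hzs : z = s <;>
            simp only [Set.mem_union, Set.mem_diff, Set.mem_singleton_iff] at hz ⊢ <;> tauto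
      have hind' : AlgebraicIndependent ℚ (Sum.elim xf' (a ∘ Fin.succ)) := by
        have hginj : Function.Injective
            (Sum.elim (fun o : Option ι => (o.elim (Sum.inr 0) Sum.inl : ι ⊕ Fin (m + 2)))
              (fun k : Fin (m + 1) => (Sum.inr k.succ : ι ⊕ Fin (m + 2)))) := by
          rintro ((_ | i1) | k1) ((_ | i2) | k2) h <;>
            simp only [Sum.elim_inl, Sum.elim_inr, Option.elim] at h <;>
            first
            | rfl
            | simp_all [Fin.succ_inj, Fin.succ_ne_zero, eq_comm]
        have hc := hind.comp _ hginj
        have heq : Sum.elim xf a ∘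
            (Sum.elim (fun o : Option ι => (o.elim (Sum.inr 0) Sum.inl : ι ⊕ Fin (m + 2)))
              (fun k : Fin (m + 1) => (Sum.inr k.succ : ι ⊕ Fin (m + 2)))) =
            Sum.elim xf' (a ∘ Fin.succ) := by
          funext z
          rcases z with ((_ | i) | k) <;> rfl
        rwa [heq] at hc
      have hcard' : (S \ {s}).ncard ≤ m := by
        have := Set.ncard_diff_singleton_lt_of_mem hsS hfin
        omega
      exact ih (S \ {s}) hfin.diff hcard' xf' (a ∘ Fin.succ) hind' halg'


end Stmt0Aux

set_option maxHeartbeats 1000000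

/-- Lemma 3: generic (algebraically independent) linear combinations
`g_j = ∑ i α_{i,j} f_i` define the same variety as `f_1, …, f_s`. -/
theorem stmt0 (n s : ℕ) (f : Fin s → MvPolynomial (Fin n) ℤ)
    (α : Fin s → Fin (n + 1) → ℂ)
    (hα : AlgebraicIndependent ℚ (fun p : Fin s × Fin (n + 1) => α p.1 p.2)) :
    {x : Fin n → ℂ | ∀ j : Fin (n + 1),
        ∑ i : Fin s, α i j * aeval x (f i) = 0} =
    {x : Fin n → ℂ | ∀ i : Fin s, aeval x (f i) = 0} := by
  ext x
  simp only [Set.mem_setOf_eq]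
  constructor
  · intro hx
    by_contra hcon
    push_neg at hcon
    obtain ⟨i₀, hc0⟩ := hcon
    classical
    set c : Fin s → ℂ := fun i => MvPolynomial.aeval x (f i) with hcdef
    set ι := ({i : Fin s // i ≠ i₀} × Fin (n + 1)) with hι
    set xfam : ι → ℂ := fun q => α q.1.1 q.2 with hxfam
    set aα : Fin (n + 1) → ℂ := fun j => α i₀ j with haα
    set V : Set ℂ := Set.range x ∪ Set.range xfam with hV
    set K := IntermediateField.adjoin ℚ V with hK
    -- values of the integer polynomials lie in K
    have hmem : ∀ i : Fin s, c i ∈ IntermediateField.adjoin ℚ (Set.range x) := by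
      intro i
      have h1 : c i ∈ Algebra.adjoin ℤ (Set.range x) := by
        rw [Algebra.adjoin_range_eq_range_aeval]
        exact ⟨f i, rfl⟩
      have h2 : Algebra.adjoin ℤ (Set.range x) ≤
          (IntermediateField.adjoin ℚ (Set.range x)).toSubalgebra.restrictScalars ℤ := by
        rw [Algebra.adjoin_le_iff]
        exact fun z hz => IntermediateField.subset_adjoin ℚ _ hz
      exact h2 h1
    have hcK : ∀ i, c i ∈ K := fun i =>
      IntermediateField.adjoin.mono ℚ _ _ Set.subset_union_left (hmem i)
    have hαK : ∀ (i : Fin s) (hi : i ≠ i₀) (j : Fin (n + 1)), α i j ∈ K := fun i hi j =>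
      IntermediateField.subset_adjoin ℚ _ (Or.inr ⟨⟨⟨i, hi⟩, j⟩, rfl⟩)
    have hαi₀ : ∀ j : Fin (n + 1), α i₀ j ∈ K := by
      intro j
      have h0 : α i₀ j * c i₀ + ∑ i ∈ Finset.univ.erase i₀, α i j * c i = 0 := by
        have h1 := Finset.add_sum_erase Finset.univ (fun i => α i j * c i) (Finset.mem_univ i₀)
        rw [h1]
        exact hx j
      have hval : α i₀ j = (-(∑ i ∈ Finset.univ.erase i₀, α i j * c i)) * (c i₀)⁻¹ := by
        rw [eq_mul_inv_iff_mul_eq₀ hc0]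
        linear_combination h0
      rw [hval]
      exact K.mul_mem
        (K.neg_mem (Subfield.sum_mem _ fun i hi =>
          K.mul_mem (hαK i (Finset.ne_of_mem_erase hi) j) (hcK i)))
        (K.inv_mem (hcK i₀))
    -- joint algebraic independence
    have hind : AlgebraicIndependent ℚ (Sum.elim xfam aα) := by
      have hginj : Function.Injective
          (Sum.elim (fun q : ι => ((q.1.1, q.2) : Fin s × Fin (n + 1)))
            (fun j : Fin (n + 1) => ((i₀, j) : Fin s × Fin (n + 1)))) := by
        rintro (⟨⟨i1, h1⟩, j1⟩ | j1) (⟨⟨i2, h2⟩, j2⟩ | j2) h <;>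
          simp only [Sum.elim_inl, Sum.elim_inr, Prod.mk.injEq] at h
        · obtain ⟨h3, h4⟩ := h
          subst h4
          congr 1
          exact Prod.ext (Subtype.ext h3) rfl
        · exact absurd h.1 h1
        · exact absurd h.1.symm h2
        · rw [h.2]
      have hc := hα.comp _ hginj
      have heq : ((fun p : Fin s × Fin (n + 1) => α p.1 p.2) ∘
          (Sum.elim (fun q : ι => ((q.1.1, q.2) : Fin s × Fin (n + 1)))
            (fun j : Fin (n + 1) => ((i₀, j) : Fin s × Fin (n + 1))))) =
          Sum.elim xfam aα := by
        funext z
        rcases z with (⟨⟨i1, h1⟩, j1⟩ | j1) <;> rfl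
      rwa [heq] at hc
    -- apply the core lemma
    have hfinS : (Set.range x).Finite := Set.finite_range x
    have hcardS : (Set.range x).ncard ≤ n := by
      rw [← Set.image_univ]
      exact (Set.ncard_image_le Set.finite_univ).trans (by simp [Set.ncard_univ])
    refine Stmt0Aux.core n (Set.range x) hfinS hcardS xfam aα hind ?_
    intro k
    have hmemk : aα k ∈ IntermediateField.adjoin ℚ (Set.range x ∪ Set.range xfam) := hαi₀ k
    have := isAlgebraic_algebraMap (R := ↥(IntermediateField.adjoin ℚ
      (Set.range x ∪ Set.range xfam))) (A := ℂ) ⟨aα k, hmemk⟩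
    simpa using this
  · intro hz j
    exact Finset.sum_eq_zero fun i _ => by rw [hz i, mul_zero]
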